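/- Let (X_i,Z_i) and (X_j,Z_j) be two independent, identically distributed random pairs with values in {0,1}² and common joint probability mass function ψ. Set p^X = ψ(1,0)+ψ(1,1), p^Z = ψ(0,1)+ψ(1,1), and κ = ψ(1,1) − p^X·p^Z, and assume 0 < p^Z < 1. Then, conditionally on the event Z_i ≠ Z_j, the total variation distance between the conditional joint law of (X_i,X_j) and the product of its conditional marginals equals 2κ² / (2·p^Z·(1−p^Z))². -/
import Mathlib


open Finset

/-- Let `(X_i, Z_i)` and `(X_j, Z_j)` be two independent,
identically distributed random pairs with values in `{0,1}²` and common joint pmf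
`ψ`.  With `p^X = ψ(1,0) + ψ(1,1)`, `p^Z = ψ(0,1) + ψ(1,1)`,
`κ = ψ(1,1) - p^X·p^Z`, and `0 < p^Z < 1` (so that the event `Z_i ≠ Z_j` has positive
probability `Pneq = 2p^Z(1-p^Z)`), conditionally on `Z_i ≠ Z_j` the total variation
distance between the conditional joint law of `(X_i, X_j)` and the product of its
conditional marginals equals `2κ² / (2p^Z(1-p^Z))²`.

Here `(∑ z, ψ x z * ψ y (!z)) / Pneq` is the conditional probability
`P(X_i = x, X_j = y | Z_i ≠ Z_j)`, and the conditional marginals are obtained by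
summing out the other coordinate. -/
theorem cavity_discrepancy_odd
    (ψ : Bool → Bool → ℝ)
    (hpos : ∀ x z, 0 ≤ ψ x z)
    (hsum : ∑ x : Bool, ∑ z : Bool, ψ x z = 1)
    (pX pZ κ Pneq : ℝ)
    (hpX : pX = ψ true false + ψ true true)
    (hpZ : pZ = ψ false true + ψ true true)
    (hκ : κ = ψ true true - pX * pZ)
    (hPneq : Pneq = ∑ x : Bool, ∑ y : Bool, ∑ z : Bool, ψ x z * ψ y (!z))
    (hpZ0 : 0 < pZ) (hpZ1 : pZ < 1) :
    (1 / 2) * ∑ x : Bool, ∑ y : Bool,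
        |(∑ z : Bool, ψ x z * ψ y (!z)) / Pneq -
            ((∑ y' : Bool, ∑ z : Bool, ψ x z * ψ y' (!z)) / Pneq) *
              ((∑ x' : Bool, ∑ z : Bool, ψ x' z * ψ y (!z)) / Pneq)| =
      2 * κ ^ 2 / (2 * pZ * (1 - pZ)) ^ 2 := by
  simp only [Fintype.sum_bool, Bool.not_true, Bool.not_false] at hsum hPneq ⊢
  set a := ψ false false with ha
  set b := ψ false true with hb
  set c := ψ true false with hc
  set d := ψ true true with hd
  subst hpX hpZ hκ
  have hP2 : Pneq = 2 * (a + c) * (b + d) := by rw [hPneq]; ring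
  have hκad : d - (c + d) * (b + d) = a * d - b * c := by
    linear_combination (-d) * hsum
  have hPeq : Pneq = 2 * (b + d) * (1 - (b + d)) := by
    rw [hP2]; linear_combination (2 * (b + d)) * hsum
  have hP0 : (0:ℝ) < Pneq := by rw [hPeq]; nlinarith
  have hPne : Pneq ≠ 0 := ne_of_gt hP0
  have eTT : (d * c + c * d) / Pneq -
      ((d * c + c * d) + (d * a + c * b)) / Pneq *
        (((d * c + c * d) + (b * c + a * d)) / Pneq)
      = -((a * d - b * c) ^ 2 / Pneq ^ 2) := by
    rw [hP2] at hPne ⊢; field_simp; ring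
  have eTF : (d * a + c * b) / Pneq -
      ((d * c + c * d) + (d * a + c * b)) / Pneq *
        (((d * a + c * b) + (b * a + a * b)) / Pneq)
      = (a * d - b * c) ^ 2 / Pneq ^ 2 := by
    rw [hP2] at hPne ⊢; field_simp; ring
  have eFT : (b * c + a * d) / Pneq -
      ((b * c + a * d) + (b * a + a * b)) / Pneq *
        (((d * c + c * d) + (b * c + a * d)) / Pneq)
      = (a * d - b * c) ^ 2 / Pneq ^ 2 := by
    rw [hP2] at hPne ⊢; field_simp; ring
  have eFF : (b * a + a * b) / Pneq -
      ((b * c + a * d) + (b * a + a * b)) / Pneq *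
        (((d * a + c * b) + (b * a + a * b)) / Pneq)
      = -((a * d - b * c) ^ 2 / Pneq ^ 2) := by
    rw [hP2] at hPne ⊢; field_simp; ring
  rw [eTT, eTF, eFT, eFF, hκad]
  have hnn : (0:ℝ) ≤ (a * d - b * c) ^ 2 / Pneq ^ 2 := by positivity
  simp only [abs_neg, abs_of_nonneg hnn]
  rw [← hPeq]
  ring
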